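/- arXiv:2503.16232 — 2 statements merged into one kernel-verified Lean document; each statement's English description precedes it below -/
import Mathlib

section
/- Consider the system of ODEs a(0)=1, a' = -(ε/(n-1))·a/(κ²a+ε) - κ²a²/(κ²a+ε) and b(0)=1, b' = -(ε/(n-1))·b/(κ²a+ε), with constants ε > 0, κ > 0, and n ≥ 2. Then the maximal solution (a,b) is defined on all of [0,∞), and both a and b are positive and monotonically decreasing. -/
open Set Filter Real

/-- The ODE system `a(0)=1`, `a' = -(ε/(n-1))·a/(κ²a+ε) - κ²a²/(κ²a+ε)`,
`b(0)=1`, `b' = -(ε/(n-1))·b/(κ²a+ε)` with `ε > 0`, `κ > 0`, `n ≥ 2`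
has a (maximal) solution defined on all of `[0,∞)`, and both components are
positive and monotonically decreasing. -/
theorem ode_global_solution (ε κ : ℝ) (hε : 0 < ε) (hκ : 0 < κ) (n : ℕ)
    (hn : 2 ≤ n) :
    ∃ a b : ℝ → ℝ,
      a 0 = 1 ∧ b 0 = 1 ∧
      (∀ s ∈ Set.Ici (0 : ℝ),
        HasDerivAt a
          (-(ε / ((n : ℝ) - 1)) * (a s / (κ ^ 2 * a s + ε))
            - κ ^ 2 * (a s) ^ 2 / (κ ^ 2 * a s + ε)) s ∧
        HasDerivAt b (-(ε / ((n : ℝ) - 1)) * (b s / (κ ^ 2 * a s + ε))) s) ∧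
      (∀ s ∈ Set.Ici (0 : ℝ), 0 < a s ∧ 0 < b s) ∧
      AntitoneOn a (Set.Ici 0) ∧ AntitoneOn b (Set.Ici 0) := by
  have hm1 : (1:ℝ) ≤ (n:ℝ) - 1 := by
    have : (2:ℝ) ≤ (n:ℝ) := by exact_mod_cast hn
    linarith
  set m : ℝ := (n:ℝ) - 1 with hmdef
  have hm0 : (0:ℝ) < m := lt_of_lt_of_le one_pos hm1
  set α : ℝ := ε / m with hαdef
  have hα : 0 < α := div_pos hε hm0
  have hmα : m * α = ε := by
    rw [hαdef]; field_simp
  have hκ2 : (0:ℝ) < κ ^ 2 := by positivity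
  set H : ℝ → ℝ := fun x => m * Real.log x + (1 - m) * Real.log (α + κ ^ 2 * x) with hHdef
  have hden : ∀ x : ℝ, 0 < x → 0 < α + κ ^ 2 * x := fun x hx => by positivity
  -- derivative of H
  have hHd : ∀ x : ℝ, 0 < x →
      HasDerivAt H ((ε + κ ^ 2 * x) / (x * (α + κ ^ 2 * x))) x := by
    intro x hx
    have h1 : HasDerivAt (fun x : ℝ => m * Real.log x) (m * x⁻¹) x :=
      (Real.hasDerivAt_log hx.ne').const_mul m
    have hin : HasDerivAt (fun x : ℝ => α + κ ^ 2 * x) (κ ^ 2) x := by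
      simpa using ((hasDerivAt_id x).const_mul (κ ^ 2)).const_add α
    have h2 : HasDerivAt (fun x : ℝ => (1 - m) * Real.log (α + κ ^ 2 * x))
        ((1 - m) * (κ ^ 2 / (α + κ ^ 2 * x))) x :=
      (hin.log (hden x hx).ne').const_mul (1 - m)
    have := h1.add h2
    refine this.congr_deriv ?_
    symm
    have hx' := hx.ne'
    have hd' := (hden x hx).ne'
    field_simp
    nlinarith [hmα]
  -- H is strictly monotone on Ioi 0
  have hHcont : ContinuousOn H (Ioi (0:ℝ)) := fun x hx =>
    (hHd x hx).continuousAt.continuousWithinAt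
  have hHmono : StrictMonoOn H (Ioi (0:ℝ)) := by
    apply strictMonoOn_of_deriv_pos (convex_Ioi 0) hHcont
    intro x hx
    rw [interior_Ioi] at hx
    have hx' : 0 < x := hx
    rw [(hHd x hx').deriv]
    have h2 := hden x hx'
    positivity
  -- H tends to -∞ at 0⁺
  have ht0 : Tendsto H (nhdsWithin 0 (Ioi 0)) atBot := by
    have h1 : Tendsto (fun x : ℝ => m * Real.log x) (nhdsWithin 0 (Ioi 0)) atBot :=
      Real.tendsto_log_nhdsGT_zero.const_mul_atBot hm0
    have hc : ContinuousAt (fun x : ℝ => (1 - m) * Real.log (α + κ ^ 2 * x)) 0 := by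
      apply ContinuousAt.mul continuousAt_const
      apply ContinuousAt.log
      · exact (continuous_const.add (continuous_const.mul continuous_id)).continuousAt
      · simpa using hα.ne'
    have h2 : Tendsto (fun x : ℝ => (1 - m) * Real.log (α + κ ^ 2 * x))
        (nhdsWithin 0 (Ioi 0)) (nhds ((1 - m) * Real.log (α + κ ^ 2 * 0))) :=
      (hc.tendsto).mono_left nhdsWithin_le_nhds
    exact h1.atBot_add h2
  -- H tends to +∞ at +∞
  have htop : Tendsto H atTop atTop := by
    have key : ∀ᶠ x : ℝ in atTop,
        Real.log x + (m - 1) * Real.log (x / (α + κ ^ 2 * x)) = H x := by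
      filter_upwards [eventually_gt_atTop (0:ℝ)] with x hx
      have := hden x hx
      rw [hHdef]
      simp only
      rw [Real.log_div hx.ne' this.ne']
      ring
    have h2 : Tendsto (fun x : ℝ => x / (α + κ ^ 2 * x)) atTop (nhds ((κ ^ 2)⁻¹)) := by
      have heq : ∀ᶠ x : ℝ in atTop, (α / x + κ ^ 2)⁻¹ = x / (α + κ ^ 2 * x) := by
        filter_upwards [eventually_gt_atTop (0:ℝ)] with x hx
        rw [eq_div_iff (hden x hx).ne', inv_mul_eq_div, div_eq_iff]
        · field_simp
        · have : 0 < α / x + κ ^ 2 := by positivity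
          exact this.ne'
      rw [← tendsto_congr' heq]
      have hd : Tendsto (fun x : ℝ => α / x + κ ^ 2) atTop (nhds (0 + κ ^ 2)) :=
        (tendsto_const_nhds.div_atTop tendsto_id).add tendsto_const_nhds
      rw [zero_add] at hd
      exact hd.inv₀ hκ2.ne'
    have h3 : Tendsto (fun x : ℝ => (m - 1) * Real.log (x / (α + κ ^ 2 * x))) atTop
        (nhds ((m - 1) * Real.log ((κ ^ 2)⁻¹))) :=
      (((Real.continuousAt_log (by positivity)).tendsto.comp h2)).const_mul (m - 1)
    have := Real.tendsto_log_atTop.atTop_add h3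
    exact Tendsto.congr' key this
  -- surjectivity of H from (0,∞) onto ℝ
  have hsurj : ∀ y : ℝ, ∃ x : ℝ, 0 < x ∧ H x = y := by
    intro y
    obtain ⟨x₂, hx₂⟩ := (htop.eventually (eventually_ge_atTop y)).exists
    obtain ⟨x₁, hx₁mem, hx₁⟩ := ((ht0.eventually (eventually_le_atBot y)).and
      self_mem_nhdsWithin).exists
    have hx₁pos : 0 < x₁ := hx₁
    -- also need x₂ can be taken > 0; enlarge
    obtain ⟨x₂', hx₂'⟩ := ((htop.eventually (eventually_ge_atTop y)).and
      (eventually_gt_atTop 0)).exists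
    rcases le_total x₁ x₂' with h12 | h12
    · have hsub : Icc x₁ x₂' ⊆ Ioi 0 := fun t ht => lt_of_lt_of_le hx₁pos ht.1
      have : y ∈ Icc (H x₁) (H x₂') := ⟨hx₁mem, hx₂'.1⟩
      obtain ⟨x, hxmem, hxeq⟩ := intermediate_value_Icc h12 (hHcont.mono hsub) this
      exact ⟨x, hsub hxmem, hxeq⟩
    · -- then H x₂' ≤ H x₁ ≤ y ≤ H x₂', so equality
      have h1 : H x₂' ≤ H x₁ := (hHmono.monotoneOn) hx₂'.2 hx₁pos h12
      exact ⟨x₁, hx₁pos, le_antisymm hx₁mem (le_trans hx₂'.1 h1)⟩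
  -- the inverse function g
  choose g hgpos hgH using hsurj
  have hgleft : ∀ x : ℝ, 0 < x → g (H x) = x := by
    intro x hx
    exact hHmono.injOn (hgpos (H x)) hx (hgH (H x))
  have hgmono : Monotone g := by
    intro y₁ y₂ h
    by_contra hlt
    push_neg at hlt
    have := hHmono (hgpos y₂) (hgpos y₁) hlt
    rw [hgH, hgH] at this
    exact absurd h (not_le.mpr this)
  have hgrange : Set.range g = Ioi (0:ℝ) := by
    apply Set.Subset.antisymm
    · rintro _ ⟨y, rfl⟩; exact hgpos y
    · intro x hx; exact ⟨H x, hgleft x hx⟩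
  have hgcont : Continuous g := by
    rw [continuous_iff_continuousAt]
    intro y
    apply continuousAt_of_monotoneOn_of_image_mem_nhds
      (fun x _ y _ h => hgmono h) Filter.univ_mem
    rw [Set.image_univ, hgrange]
    exact Ioi_mem_nhds (hgpos y)
  -- derivative of g
  have hgd : ∀ y : ℝ, HasDerivAt g
      (((ε + κ ^ 2 * g y) / (g y * (α + κ ^ 2 * g y)))⁻¹) y := by
    intro y
    apply HasDerivAt.of_local_left_inverse hgcont.continuousAt
      (hHd (g y) (hgpos y))
    · have h1 := hgpos y
      have h2 := hden (g y) h1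
      positivity
    · exact Filter.Eventually.of_forall hgH
  -- define a
  set c : ℝ := H 1 with hcdef
  set a : ℝ → ℝ := fun s => g (c - s) with hadef
  have ha0 : a 0 = 1 := by
    rw [hadef]
    simp only [sub_zero]
    exact hgleft 1 one_pos
  have hapos : ∀ s : ℝ, 0 < a s := fun s => hgpos _
  have had : ∀ s : ℝ, HasDerivAt a
      (-(ε / ((n : ℝ) - 1)) * (a s / (κ ^ 2 * a s + ε))
        - κ ^ 2 * (a s) ^ 2 / (κ ^ 2 * a s + ε)) s := by
    intro s
    have hlin : HasDerivAt (fun s : ℝ => c - s) (-1) s := by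
      simpa using (hasDerivAt_id s).const_sub c
    have := (hgd (c - s)).comp s hlin
    refine this.congr_deriv ?_
    symm
    have h1 := hapos s
    have h2 := hden (a s) h1
    have h3 : 0 < κ ^ 2 * a s + ε := by positivity
    rw [hadef]
    simp only
    rw [← hmdef]
    rw [← hmα]
    field_simp
    ring
  have haanti : Antitone a := fun x y h => hgmono (by linarith)
  have hacont : Continuous a := hgcont.comp (continuous_const.sub continuous_id)
  -- define b
  set ψ : ℝ → ℝ := fun t => α / (κ ^ 2 * a t + ε) with hψdef
  have hψpos : ∀ t : ℝ, 0 < ψ t := by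
    intro t
    have := hapos t
    have : 0 < κ ^ 2 * a t + ε := by positivity
    exact div_pos hα this
  have hψcont : Continuous ψ := by
    apply continuous_const.div
    · exact (continuous_const.mul hacont).add continuous_const
    · intro t
      have := hapos t
      positivity
  set φ : ℝ → ℝ := fun s => ∫ t in (0:ℝ)..s, ψ t with hφdef
  have hφd : ∀ s : ℝ, HasDerivAt φ (ψ s) s := fun s =>
    (hψcont.integral_hasStrictDerivAt 0 s).hasDerivAt
  have hφmono : Monotone φ := by
    intro x y h
    have : φ y - φ x = ∫ t in x..y, ψ t := by
      rw [hφdef]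
      simp only
      rw [← intervalIntegral.integral_add_adjacent_intervals
        (hψcont.intervalIntegrable 0 x) (hψcont.intervalIntegrable x y)]
      ring
    have hnn : 0 ≤ ∫ t in x..y, ψ t :=
      intervalIntegral.integral_nonneg h (fun t _ => (hψpos t).le)
    linarith [this ▸ hnn]
  set b : ℝ → ℝ := fun s => Real.exp (-φ s) with hbdef
  have hb0 : b 0 = 1 := by
    rw [hbdef]
    simp [hφdef]
  have hbpos : ∀ s : ℝ, 0 < b s := fun s => Real.exp_pos _
  have hbd : ∀ s : ℝ, HasDerivAt b
      (-(ε / ((n : ℝ) - 1)) * (b s / (κ ^ 2 * a s + ε))) s := by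
    intro s
    have := ((hφd s).neg).exp
    refine this.congr_deriv ?_
    symm
    have h1 := hapos s
    have h3 : 0 < κ ^ 2 * a s + ε := by positivity
    rw [hbdef]
    simp only [hψdef, Pi.neg_apply]
    rw [← hmdef, hαdef]
    ring
  have hbanti : Antitone b := by
    intro x y h
    exact Real.exp_le_exp.mpr (neg_le_neg (hφmono h))
  exact ⟨a, b, ha0, hb0, fun s _ => ⟨had s, hbd s⟩, fun s _ => ⟨hapos s, hbpos s⟩,
    haanti.antitoneOn _, hbanti.antitoneOn _⟩
end

section
/- Let f: M → ℝ be a smooth function on a compact manifold M with boundary, with f ≤ 1, f^{-1}({1}) = ∂M, and only finitely many critical points, all in the interior. Let Ψ^t be the negative gradient flow of f with respect to some Riemannian metric. Then for every open neighborhood U of the union of the unstable manifolds of all critical points, there exists t₀ ≥ 0 with Ψ^t(M) ⊂ U for all t ≥ t₀; equivalently, ⋂_{t≥0} Ψ^t(M) equals the union of all unstable manifolds. -/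
/-- The unstable set of a rest point `p` of the semiflow `Ψ`:  points `x`
through which there is a complete (ancient) orbit `γ` with `γ(0) = x` and
`lim_{t→-∞} γ(t) = p`. -/
def unstableSet {M : Type*} [TopologicalSpace M] (Ψ : ℝ → M → M) (p : M) :
    Set M :=
  {x : M | ∃ γ : ℝ → M, γ 0 = x ∧
    (∀ t s : ℝ, 0 ≤ s → γ (t + s) = Ψ s (γ t)) ∧
    Filter.Tendsto γ Filter.atBot (nhds p)}



private lemma absorb_aux {X : Type*} [TopologicalSpace X] (A : ℕ → Set X)
    (hcl : ∀ n, IsClosed (A n)) (hcpt : IsCompact (A 0))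
    (hmono : ∀ n, A (n + 1) ⊆ A n)
    {V : Set X} (hV : IsOpen V) (h : (⋂ n, A n) ⊆ V) : ∃ n, A n ⊆ V := by
  by_contra hcon
  push_neg at hcon
  obtain ⟨z, hz⟩ := IsCompact.nonempty_iInter_of_sequence_nonempty_isCompact_isClosed
    (fun n => A n \ V) (fun n => Set.diff_subset_diff_left (hmono n))
    (fun n => Set.not_subset.1 (hcon n) |>.imp fun z hz => ⟨hz.1, hz.2⟩)
    (hcpt.diff hV) (fun n => (hcl n).sdiff hV)
  simp only [Set.mem_iInter, Set.mem_diff] at hz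
  exact (hz 0).2 (h (Set.mem_iInter.2 fun n => (hz n).1))


private lemma key_aux
    {M : Type*} [TopologicalSpace M] [CompactSpace M] [T2Space M]
    (Ψ : ℝ → M → M)
    (hcont : Continuous fun q : ℝ × M => Ψ q.1 q.2)
    (hΨ0 : ∀ x, Ψ 0 x = x)
    (hsemi : ∀ s t : ℝ, 0 ≤ s → 0 ≤ t → ∀ x, Ψ (s + t) x = Ψ s (Ψ t x))
    (f : M → ℝ) (hf : Continuous f) (hf1 : ∀ x, f x ≤ 1)
    (C : Finset M)
    (hfix : ∀ p ∈ C, ∀ t : ℝ, 0 ≤ t → Ψ t p = p)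
    (hdec : ∀ x : M, x ∉ (C : Set M) → ∀ t : ℝ, 0 < t → f (Ψ t x) < f x)
    (x : M) (hx : ∀ n : ℕ, x ∈ Set.range (Ψ (n : ℝ))) :
    x ∈ ⋃ p ∈ C, unstableSet Ψ p := by
  classical
  have hΨc : ∀ s : ℝ, Continuous (Ψ s) := fun s =>
    hcont.comp (continuous_const.prodMk continuous_id)
  have hmono : ∀ (z : M) (s : ℝ), 0 ≤ s → f (Ψ s z) ≤ f z := by
    intro z s hs
    rcases eq_or_lt_of_le hs with h | h
    · rw [← h, hΨ0]
    · by_cases hz : z ∈ (C : Set M)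
      · rw [hfix z hz s hs]
      · exact (hdec z hz s h).le
  -- choose preimages
  choose y hy using hx
  -- the ultrafilter
  set F : Ultrafilter ℕ := Ultrafilter.of Filter.atTop with hF
  have hFle : (F : Filter ℕ) ≤ Filter.atTop := Ultrafilter.of_le _
  -- the approximating maps
  set g : ℝ → ℕ → M := fun t n => Ψ (max ((n : ℝ) + t) 0) (y n) with hg
  have hlim : ∀ t : ℝ, ∃ a : M, Filter.Tendsto (g t) (F : Filter ℕ) (nhds a) := by
    intro t
    obtain ⟨a, -, ha⟩ := isCompact_univ.ultrafilter_le_nhds (F.map (g t))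
      (by simp [Filter.le_principal_iff])
    exact ⟨a, ha⟩
  choose γ hγ using hlim
  -- eventually n + t ≥ 0
  have hev : ∀ t : ℝ, ∀ᶠ n : ℕ in (F : Filter ℕ), 0 ≤ (n : ℝ) + t := by
    intro t
    refine Filter.Eventually.filter_mono hFle ?_
    filter_upwards [(tendsto_natCast_atTop_atTop (R := ℝ)).eventually_ge_atTop (-t)] with n hn
    linarith
  -- γ 0 = x
  have hγ0 : γ 0 = x := by
    refine tendsto_nhds_unique (hγ 0) ?_
    have : g 0 = fun _ => x := by
      funext n
      simp only [hg, add_zero]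
      rw [max_eq_left (Nat.cast_nonneg n), hy n]
    rw [this]
    exact tendsto_const_nhds
  -- orbit equation
  have horb : ∀ t s : ℝ, 0 ≤ s → γ (t + s) = Ψ s (γ t) := by
    intro t s hs
    refine tendsto_nhds_unique (hγ (t + s)) ?_
    have h1 : Filter.Tendsto (fun n => Ψ s (g t n)) (F : Filter ℕ) (nhds (Ψ s (γ t))) :=
      ((hΨc s).tendsto (γ t)).comp (hγ t)
    refine h1.congr' ?_
    filter_upwards [hev t] with n hn
    simp only [hg]
    rw [max_eq_left hn, max_eq_left (by linarith), ← hsemi s ((n : ℝ) + t) hs hn]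
    ring_nf
  -- continuity of γ
  have hγcont : Continuous γ := by
    rw [continuous_iff_continuousAt]
    intro t
    have hc : Continuous fun t' : ℝ => Ψ (t' - (t - 1)) (γ (t - 1)) :=
      hcont.comp ((continuous_id.sub continuous_const).prodMk continuous_const)
    refine hc.continuousAt.congr ?_
    filter_upwards [Ioi_mem_nhds (show t - 1 < t by linarith)] with t' ht'
    have := horb (t - 1) (t' - (t - 1)) (by simp only [Set.mem_Ioi] at ht'; linarith)
    rw [show t - 1 + (t' - (t - 1)) = t' by ring] at this
    exact this.symm
  -- f ∘ γ is antitone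
  have hanti : Antitone (fun t => f (γ t)) := by
    intro t t' h
    have := horb t (t' - t) (by linarith)
    rw [show t + (t' - t) = t' by ring] at this
    show f (γ t') ≤ f (γ t)
    rw [this]
    exact hmono _ _ (by linarith)
  have hbdd : BddAbove (Set.range fun t => f (γ t)) :=
    ⟨1, by rintro z ⟨t, rfl⟩; exact hf1 _⟩
  set L : ℝ := ⨆ t : ℝ, f (γ t) with hLdef
  have hL : Filter.Tendsto (fun t => f (γ t)) Filter.atBot (nhds L) :=
    tendsto_atBot_ciSup hanti hbdd
  have hleL : ∀ t : ℝ, f (γ t) ≤ L := fun t => le_ciSup hbdd t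
  -- the α-limit sets
  set A : ℕ → Set M := fun n => closure (γ '' Set.Iic (-(n : ℝ))) with hA
  have hAcl : ∀ n, IsClosed (A n) := fun n => isClosed_closure
  have hAcpt : ∀ n, IsCompact (A n) := fun n => (hAcl n).isCompact
  have hAne : ∀ n, (A n).Nonempty := fun n =>
    ⟨γ (-(n : ℝ)), subset_closure ⟨-(n : ℝ), Set.mem_Iic.2 le_rfl, rfl⟩⟩
  have hAmono : ∀ n, A (n + 1) ⊆ A n := by
    intro n
    refine closure_mono (Set.image_mono ?_)
    intro t ht
    simp only [Set.mem_Iic] at ht ⊢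
    push_cast at ht ⊢
    linarith
  have hAinter : (⋂ n, A n).Nonempty :=
    IsCompact.nonempty_iInter_of_sequence_nonempty_isCompact_isClosed A hAmono hAne
      (hAcpt 0) hAcl
  -- f = L on the α-limit set
  have hfa : ∀ a ∈ ⋂ n, A n, f a = L := by
    intro a ha
    simp only [Set.mem_iInter] at ha
    have key : ∀ n : ℕ, f (γ (-(n : ℝ))) ≤ f a ∧ f a ≤ L := by
      intro n
      have h1 : f a ∈ closure (f '' (γ '' Set.Iic (-(n : ℝ)))) :=
        (image_closure_subset_closure_image hf) ⟨a, ha n, rfl⟩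
      have h2 : closure (f '' (γ '' Set.Iic (-(n : ℝ)))) ⊆
          Set.Icc (f (γ (-(n : ℝ)))) L := by
        refine closure_minimal ?_ isClosed_Icc
        rintro z ⟨w, ⟨t, ht, rfl⟩, rfl⟩
        exact ⟨hanti ht, hleL t⟩
      exact ⟨(h2 h1).1, (h2 h1).2⟩
    have hlim2 : Filter.Tendsto (fun n : ℕ => f (γ (-(n : ℝ)))) Filter.atTop (nhds L) := by
      refine hL.comp ?_
      exact Filter.tendsto_neg_atBot_iff.2 tendsto_natCast_atTop_atTop
    have h1 : L ≤ f a := le_of_tendsto hlim2 (Filter.Eventually.of_forall fun n => (key n).1)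
    exact le_antisymm (key 0).2 h1
  -- forward invariance of the α-limit set under Ψ 1
  have hinv : ∀ a ∈ ⋂ n, A n, Ψ 1 a ∈ ⋂ n, A n := by
    intro a ha
    simp only [Set.mem_iInter] at ha ⊢
    intro n
    have h1 : Ψ 1 a ∈ closure (Ψ 1 '' (γ '' Set.Iic (-((n : ℕ) + 1 : ℕ) : ℝ))) :=
      (image_closure_subset_closure_image (hΨc 1)) ⟨a, ha (n + 1), rfl⟩
    refine closure_mono ?_ h1
    rintro z ⟨w, ⟨t, ht, rfl⟩, rfl⟩
    refine ⟨t + 1, ?_, horb t 1 zero_le_one⟩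
    simp only [Set.mem_Iic] at ht ⊢
    push_cast at ht
    linarith
  -- the α-limit set consists of rest points
  have hAC : (⋂ n, A n) ⊆ (C : Set M) := by
    intro a ha
    by_contra hac
    have h1 := hdec a hac 1 one_pos
    rw [hfa a ha, hfa _ (hinv a ha)] at h1
    exact lt_irrefl _ h1
  -- pick the limit point
  obtain ⟨p, hp⟩ := hAinter
  have hpC : p ∈ (C : Set M) := hAC hp
  -- separate p from the rest of C
  obtain ⟨Up, Us, hUpo, hUso, hpUp, hSUs, hdisj⟩ :=
    SeparatedNhds.of_isCompact_isCompact (isCompact_singleton (x := p))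
      (((C : Set M).toFinite.diff : ((C : Set M) \ {p}).Finite).isCompact)
      (by simp [Set.disjoint_left])
  have hpUp' : p ∈ Up := hpUp rfl
  -- the α-limit set is {p}
  have habs : ∀ V : Set M, IsOpen V → (⋂ n, A n) ⊆ V → ∃ n, A n ⊆ V := fun V hV h =>
    absorb_aux A hAcl (hAcpt 0) hAmono hV h
  have hsing : (⋂ n, A n) ⊆ {p} := by
    obtain ⟨n₀, hn₀⟩ := habs (Up ∪ Us) (hUpo.union hUso) (by
      intro a ha
      rcases eq_or_ne a p with rfl | hne
      · exact Or.inl hpUp'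
      · exact Or.inr (hSUs ⟨hAC ha, hne⟩))
    have hIsub : γ '' Set.Iic (-(n₀ : ℝ)) ⊆ Up ∪ Us :=
      subset_closure.trans hn₀
    have hIpre : IsPreconnected (γ '' Set.Iic (-(n₀ : ℝ))) :=
      isPreconnected_Iic.image γ hγcont.continuousOn
    have hmeet : (γ '' Set.Iic (-(n₀ : ℝ)) ∩ Up).Nonempty := by
      have hpcl : p ∈ closure (γ '' Set.Iic (-(n₀ : ℝ))) := by
        simpa using Set.mem_iInter.1 hp n₀
      obtain ⟨z, hz1, hz2⟩ := mem_closure_iff.1 hpcl Up hUpo hpUp'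
      exact ⟨z, hz2, hz1⟩
    have hIUp : γ '' Set.Iic (-(n₀ : ℝ)) ⊆ Up :=
      hIpre.subset_left_of_subset_union hUpo hUso hdisj hIsub hmeet
    intro a ha
    have haC : a ∈ (C : Set M) := hAC ha
    have hacl : a ∈ closure Up :=
      (closure_mono hIUp) (by simpa using Set.mem_iInter.1 ha n₀)
    by_contra hne
    have haUs : a ∈ Us := hSUs ⟨haC, hne⟩
    obtain ⟨z, hz1, hz2⟩ := mem_closure_iff.1 hacl Us hUso haUs
    exact Set.disjoint_left.1 hdisj hz2 hz1
  -- γ tends to p at -∞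
  have htend : Filter.Tendsto γ Filter.atBot (nhds p) := by
    rw [tendsto_nhds]
    intro W hWo hpW
    obtain ⟨n, hn⟩ := habs W hWo (hsing.trans (by simp [hpW]))
    exact Filter.mem_of_superset (Filter.Iic_mem_atBot (-(n : ℝ)))
      (fun t ht => hn (subset_closure ⟨t, ht, rfl⟩))
  exact Set.mem_iUnion₂.2 ⟨p, hpC, γ, hγ0, horb, htend⟩

/-- **Convergence of the negative gradient flow to the unstable manifolds.**
Let `f : M → ℝ` be a smooth (Morse) function on a compact manifold with
boundary, with `f ≤ 1`, `f⁻¹(1) = ∂M` and finitely many critical points `C`,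
all interior, and let `Ψ^t` be the negative gradient semiflow of `f` (so `f`
strictly decreases along nonconstant flow lines and the rest points of `Ψ` are
exactly the critical points of `f`).  Then for every open neighborhood `U` of
the union of the unstable manifolds of the critical points there is a `t₀ ≥ 0`
with `Ψ^t(M) ⊆ U` for all `t ≥ t₀`; equivalently,
`⋂_{t ≥ 0} Ψ^t(M)` equals the union of all unstable manifolds. -/
theorem gradient_flow_converges_to_unstable
    {M : Type*} [TopologicalSpace M] [CompactSpace M] [T2Space M]
    (Ψ : ℝ → M → M)
    (hcont : Continuous fun q : ℝ × M => Ψ q.1 q.2)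
    (hΨ0 : ∀ x, Ψ 0 x = x)
    (hsemi : ∀ s t : ℝ, 0 ≤ s → 0 ≤ t → ∀ x, Ψ (s + t) x = Ψ s (Ψ t x))
    (f : M → ℝ) (hf : Continuous f) (hf1 : ∀ x, f x ≤ 1)
    (C : Finset M)
    (hfix : ∀ p ∈ C, ∀ t : ℝ, 0 ≤ t → Ψ t p = p)
    (hdec : ∀ x : M, x ∉ (C : Set M) → ∀ t : ℝ, 0 < t → f (Ψ t x) < f x) :
    (∀ U : Set M, IsOpen U → (⋃ p ∈ C, unstableSet Ψ p) ⊆ U →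
      ∃ t₀ : ℝ, 0 ≤ t₀ ∧ ∀ t : ℝ, t₀ ≤ t → Set.range (Ψ t) ⊆ U) ∧
    (⋂ t ∈ Set.Ici (0 : ℝ), Set.range (Ψ t)) = ⋃ p ∈ C, unstableSet Ψ p := by
  classical
  have hΨc : ∀ s : ℝ, Continuous (Ψ s) := fun s =>
    hcont.comp (continuous_const.prodMk continuous_id)
  -- the easy inclusion: unstable sets are in every forward image
  have hWK : (⋃ p ∈ C, unstableSet Ψ p) ⊆ ⋂ t ∈ Set.Ici (0 : ℝ), Set.range (Ψ t) := by
    intro x hx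
    obtain ⟨p, hp, γ, hγ0, horb, -⟩ := Set.mem_iUnion₂.1 hx
    refine Set.mem_iInter₂.2 fun t ht => ⟨γ (-t), ?_⟩
    have := horb (-t) t ht
    rw [neg_add_cancel, hγ0] at this
    exact this.symm
  -- the hard inclusion
  have hKW : (⋂ t ∈ Set.Ici (0 : ℝ), Set.range (Ψ t)) ⊆ ⋃ p ∈ C, unstableSet Ψ p := by
    intro x hx
    exact key_aux Ψ hcont hΨ0 hsemi f hf hf1 C hfix hdec x
      (fun n => Set.mem_iInter₂.1 hx (n : ℝ) (Set.mem_Ici.2 (Nat.cast_nonneg n)))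
  -- monotonicity of ranges
  have hrmono : ∀ a b : ℝ, 0 ≤ a → a ≤ b → Set.range (Ψ b) ⊆ Set.range (Ψ a) := by
    rintro a b ha hab z ⟨w, rfl⟩
    refine ⟨Ψ (b - a) w, ?_⟩
    rw [← hsemi a (b - a) ha (by linarith), show a + (b - a) = b by ring]
  -- the intersection over t ≥ 0 equals the intersection over ℕ
  have hKeq : (⋂ t ∈ Set.Ici (0 : ℝ), Set.range (Ψ t)) = ⋂ n : ℕ, Set.range (Ψ (n : ℝ)) := by
    apply Set.Subset.antisymm
    · exact fun z hz => Set.mem_iInter.2 fun n =>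
        Set.mem_iInter₂.1 hz (n : ℝ) (Set.mem_Ici.2 (Nat.cast_nonneg n))
    · intro z hz
      refine Set.mem_iInter₂.2 fun t ht => ?_
      have h1 : t ≤ (⌈t⌉₊ : ℝ) := Nat.le_ceil t
      exact hrmono t (⌈t⌉₊ : ℝ) ht h1 (Set.mem_iInter.1 hz ⌈t⌉₊)
  constructor
  · intro U hU hWU
    have hsub : (⋂ n : ℕ, Set.range (Ψ (n : ℝ))) ⊆ U := by
      rw [← hKeq]
      exact fun z hz => hWU (hKW hz)
    obtain ⟨n₀, hn₀⟩ := absorb_aux (fun n : ℕ => Set.range (Ψ (n : ℝ)))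
      (fun n => (isCompact_range (hΨc _)).isClosed)
      (isCompact_range (hΨc _))
      (fun n => by
        have := hrmono (n : ℝ) ((n + 1 : ℕ) : ℝ) (Nat.cast_nonneg n) (by push_cast; linarith)
        exact this)
      hU hsub
    exact ⟨(n₀ : ℝ), Nat.cast_nonneg n₀,
      fun t ht => (hrmono (n₀ : ℝ) t (Nat.cast_nonneg n₀) ht).trans hn₀⟩
  · exact Set.Subset.antisymm hKW hWK
end
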